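/- Let r > 0, σ ≠ 0, and ξ ∈ ℝ. Define F : ℝ → ℝ by F(u) = exp(−(u−ξ)²/(√r·σ²)) and h : ℝ → ℝ by h(u) = √r·(u−ξ)². Then for all real u, (1/(2r))·(d/du)(F(u)·h′(u)) + (σ²/2)·F″(u) = 0; that is, the Gaussian F is a stationary solution of the Fokker–Planck equation under the optimal feedback control α = −(1/(2r))·h′. -/

import Mathlib

/-- the Gaussian `F(u) = exp(−(u−ξ)²/(√r·σ²))` is a stationary solution
of the Fokker–Planck equation under the optimal feedback control
`α = −(1/(2r))·h′` with `h(u) = √r·(u−ξ)²`: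
`(1/(2r))·(F·h′)′ + (σ²/2)·F″ = 0`. -/
theorem mfg_stationary_fokker_planck (r σ ξ : ℝ) (hr : 0 < r) (hσ : σ ≠ 0) (u : ℝ) :
    (1 / (2 * r)) *
        deriv (fun w : ℝ => Real.exp (-(w - ξ) ^ 2 / (Real.sqrt r * σ ^ 2)) *
          deriv (fun v : ℝ => Real.sqrt r * (v - ξ) ^ 2) w) u +
      (σ ^ 2 / 2) *
        deriv (deriv (fun w : ℝ => Real.exp (-(w - ξ) ^ 2 / (Real.sqrt r * σ ^ 2)))) u = 0 := by
  set s := Real.sqrt r with hsdef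
  have hspos : 0 < s := Real.sqrt_pos.mpr hr
  have hs2 : s ^ 2 = r := Real.sq_sqrt hr.le
  have hσ2 : σ ^ 2 ≠ 0 := pow_ne_zero 2 hσ
  have hsσ : s * σ ^ 2 ≠ 0 := mul_ne_zero hspos.ne' hσ2
  have dh : deriv (fun v : ℝ => s * (v - ξ) ^ 2) = fun v => s * (2 * (v - ξ)) := by
    funext v
    have h1 : HasDerivAt (fun v : ℝ => v - ξ) 1 v := (hasDerivAt_id v).sub_const ξ
    have : HasDerivAt (fun v : ℝ => s * (v - ξ) ^ 2) (s * (2 * (v - ξ))) v := by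
      simpa using (h1.pow 2).const_mul s
    exact this.deriv
  have hF : ∀ w : ℝ, HasDerivAt (fun w : ℝ => Real.exp (-(w - ξ) ^ 2 / (s * σ ^ 2)))
      (Real.exp (-(w - ξ) ^ 2 / (s * σ ^ 2)) * (-(2 * (w - ξ)) / (s * σ ^ 2))) w := by
    intro w
    have h1 : HasDerivAt (fun v : ℝ => v - ξ) 1 w := (hasDerivAt_id w).sub_const ξ
    have h2 : HasDerivAt (fun v : ℝ => -(v - ξ) ^ 2 / (s * σ ^ 2))
        (-(2 * (w - ξ)) / (s * σ ^ 2)) w := by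
      simpa using ((h1.pow 2).neg.div_const (s * σ ^ 2))
    exact h2.exp
  have dF : deriv (fun w : ℝ => Real.exp (-(w - ξ) ^ 2 / (s * σ ^ 2)))
      = fun w => Real.exp (-(w - ξ) ^ 2 / (s * σ ^ 2)) * (-(2 * (w - ξ)) / (s * σ ^ 2)) :=
    funext fun w => (hF w).deriv
  rw [dh, dF]
  have hlin : HasDerivAt (fun w : ℝ => s * (2 * (w - ξ))) (s * 2) u := by
    simpa using (((hasDerivAt_id u).sub_const ξ).const_mul 2).const_mul s
  have hlin2 : HasDerivAt (fun w : ℝ => -(2 * (w - ξ)) / (s * σ ^ 2)) (-2 / (s * σ ^ 2)) u := by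
    simpa using ((((hasDerivAt_id u).sub_const ξ).const_mul 2).neg.div_const (s * σ ^ 2))
  have d1 : HasDerivAt (fun w => Real.exp (-(w - ξ) ^ 2 / (s * σ ^ 2)) * (s * (2 * (w - ξ)))) _ u := (hF u).mul hlin
  have d2 : HasDerivAt (fun w => Real.exp (-(w - ξ) ^ 2 / (s * σ ^ 2)) * (-(2 * (w - ξ)) / (s * σ ^ 2))) _ u := (hF u).mul hlin2
  beta_reduce
  rw [d1.deriv, d2.deriv]
  rw [← hs2]
  field_simp
  ring
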